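/- For every n ≥ 2, the complete geometric graph on the regular wheel configuration W_{2n} contains n−1 pairwise edge-disjoint plane spanning paths. -/

import Mathlib

/-- Points in the plane. -/
abbrev Pt : Type := ℝ × ℝ

/-- A finite point set is in general position if no three of its points are collinear. -/
def GenPos (S : Finset Pt) : Prop :=
  ∀ p ∈ S, ∀ q ∈ S, ∀ r ∈ S, p ≠ q → p ≠ r → q ≠ r →
    ¬ Collinear ℝ ({p, q, r} : Set Pt)

/-- A geometric graph on `S` (a simple graph on the points of `S`, edges drawn as
straight segments) is plane if the open segments of any two distinct edges are disjoint. -/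
def IsPlaneGraph {S : Finset Pt} (G : SimpleGraph {x // x ∈ S}) : Prop :=
  ∀ a b c d : {x // x ∈ S}, G.Adj a b → G.Adj c d → s(a, b) ≠ s(c, d) →
    openSegment ℝ (a : Pt) (b : Pt) ∩ openSegment ℝ (c : Pt) (d : Pt) = ∅

/-- A plane spanning tree of `S`: a tree on all points of `S` drawn without crossings. -/
def IsPlaneSpanningTree {S : Finset Pt} (G : SimpleGraph {x // x ∈ S}) : Prop :=
  G.IsTree ∧ IsPlaneGraph G

/-- A plane spanning path of `S`: a plane spanning tree in which every vertex
has degree at most two (i.e. a plane Hamiltonian path). -/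
def IsPlaneSpanningPath {S : Finset Pt} (G : SimpleGraph {x // x ∈ S}) : Prop :=
  IsPlaneSpanningTree G ∧
    ∀ v a b c : {x // x ∈ S}, G.Adj v a → G.Adj v b → G.Adj v c →
      (a = b ∨ a = c ∨ b = c)

/-- The open segment spanned by an unordered pair of points. -/
def segOpen (e : Sym2 Pt) : Set Pt :=
  Sym2.lift ⟨fun a b => openSegment ℝ a b, fun a b => openSegment_symm ℝ a b⟩ e

/-- `F` is a crossing family in `S`: a set of nondegenerate segments with endpoints
in `S`, any two of which cross (their open segments intersect). -/
def IsCrossingFamily (S : Finset Pt) (F : Finset (Sym2 Pt)) : Prop :=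
  (∀ e ∈ F, ¬ e.IsDiag ∧ ∀ x ∈ e, x ∈ S) ∧
  (∀ e ∈ F, ∀ f ∈ F, e ≠ f → (segOpen e ∩ segOpen f).Nonempty)

/-- `x` lies strictly to the left of the directed line from `p` to `q`. -/
def leftOf (p q x : Pt) : Prop :=
  0 < (q.1 - p.1) * (x.2 - p.2) - (q.2 - p.2) * (x.1 - p.1)

/-- `x` lies strictly to the right of the directed line from `p` to `q`. -/
def rightOf (p q x : Pt) : Prop :=
  (q.1 - p.1) * (x.2 - p.2) - (q.2 - p.2) * (x.1 - p.1) < 0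

/-- The double star on `S` associated with the directed edge `pq`: the edge `pq`,
the edges from `p` to all points strictly left of the directed line `pq`, and the
edges from `q` to all points strictly right of it. -/
def doubleStar (S : Finset Pt) (p q : Pt) : SimpleGraph {x // x ∈ S} :=
  SimpleGraph.fromRel fun a b =>
    ((a : Pt) = p ∧ (b : Pt) = q) ∨
    ((a : Pt) = p ∧ leftOf p q (b : Pt)) ∨
    ((a : Pt) = q ∧ rightOf p q (b : Pt))

/-- The regular wheel configuration `W_{2n}`: `2n-1` points regularly spaced on the
unit circle together with its center. -/
noncomputable def wheel (n : ℕ) : Finset Pt :=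
  insert ((0 : ℝ), (0 : ℝ)) <| (Finset.range (2 * n - 1)).image fun j : ℕ =>
    (Real.cos (2 * Real.pi * (j : ℝ) / ((2 * n - 1 : ℕ) : ℝ)),
     Real.sin (2 * Real.pi * (j : ℝ) / ((2 * n - 1 : ℕ) : ℝ)))


noncomputable section
namespace WheelAux
open Real


/-- signed area functional of the line through `a, b` evaluated at `x` -/
def lin (a b x : Pt) : ℝ := (b.1-a.1)*(x.2-a.2) - (b.2-a.2)*(x.1-a.1)

def ptO : Pt := ((0:ℝ), (0:ℝ))

/-- the `j`-th point on the regular `m`-gon on the unit circle -/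
def q (m : ℕ) (j : ℤ) : Pt := (cos (2*π*(j:ℝ)/(m:ℝ)), sin (2*π*(j:ℝ)/(m:ℝ)))

lemma disj_of_lin (a b c d : Pt) (hc : 0 ≤ lin a b c) (hd : 0 ≤ lin a b d)
    (h : 0 < lin a b c + lin a b d) :
    openSegment ℝ a b ∩ openSegment ℝ c d = ∅ := by
  ext x
  simp only [Set.mem_inter_iff, Set.mem_empty_iff_false, iff_false, not_and]
  rintro ⟨s, t, hs, ht, hst, rfl⟩ ⟨s', t', hs', ht', hst', hx⟩
  have hseq : s = 1 - t := by linarith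
  have hseq' : s' = 1 - t' := by linarith
  subst hseq hseq'
  have h1 : lin a b ((1-t) • a + t • b) = 0 := by
    simp only [lin, Prod.smul_fst, Prod.smul_snd, Prod.fst_add, Prod.snd_add, smul_eq_mul]
    ring
  have h2 : lin a b ((1-t') • c + t' • d) = (1-t') * lin a b c + t' * lin a b d := by
    simp only [lin, Prod.smul_fst, Prod.smul_snd, Prod.fst_add, Prod.snd_add, smul_eq_mul]
    ring
  rw [hx, h1] at h2
  rcases lt_or_eq_of_le hc with h3 | h3
  · nlinarith
  · nlinarith

lemma q_eq_of_dvd {m : ℕ} (hm : 0 < m) {u v : ℤ} (h : (m:ℤ) ∣ u - v) : q m u = q m v := by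
  obtain ⟨c, hc⟩ := h
  have hu : (u:ℝ) - v = (m:ℝ) * c := by exact_mod_cast hc
  have hm' : (m:ℝ) ≠ 0 := by positivity
  have harg : 2*π*(u:ℝ)/(m:ℝ) = 2*π*(v:ℝ)/(m:ℝ) + c * (2*π) := by
    field_simp
    linear_combination hu
  simp only [q, harg]
  rw [cos_add_int_mul_two_pi, sin_add_int_mul_two_pi]

lemma q_inj {m : ℕ} (hm : 0 < m) {u v : ℤ} (h : q m u = q m v) : (m:ℤ) ∣ u - v := by
  have hcos : cos (2*π*(u:ℝ)/(m:ℝ)) = cos (2*π*(v:ℝ)/(m:ℝ)) := congrArg Prod.fst h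
  have hsin : sin (2*π*(u:ℝ)/(m:ℝ)) = sin (2*π*(v:ℝ)/(m:ℝ)) := congrArg Prod.snd h
  have h2 := Real.Angle.cos_sin_inj hcos hsin
  rw [Real.Angle.angle_eq_iff_two_pi_dvd_sub] at h2
  obtain ⟨c, hc⟩ := h2
  refine ⟨c, ?_⟩
  have hm' : (m:ℝ) ≠ 0 := by positivity
  have hpi : (0:ℝ) < π := pi_pos
  field_simp at hc
  have h5 : (2*π) * ((u:ℝ)-v) = (2*π)*((m:ℝ)*c) := by rw [hc]
  have h6 := mul_left_cancel₀ (by positivity : (2*π:ℝ) ≠ 0) h5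
  exact_mod_cast h6

lemma q_ne_o {m : ℕ} (u : ℤ) : q m u ≠ ptO := by
  intro h
  have hcos : cos (2*π*(u:ℝ)/(m:ℝ)) = 0 := congrArg Prod.fst h
  have hsin : sin (2*π*(u:ℝ)/(m:ℝ)) = 0 := congrArg Prod.snd h
  have := sin_sq_add_cos_sq (2*π*(u:ℝ)/(m:ℝ))
  rw [hcos, hsin] at this
  norm_num at this

lemma tri (α u v : ℝ) :
    (cos (α+2*u) - cos α) * (sin (α+2*v) - sin α) - (sin (α+2*u) - sin α) * (cos (α+2*v) - cos α)
      = 4 * sin u * sin (v - u) * sin v := by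
  have h1 := sin_sq_add_cos_sq α
  have h2 := sin_sq_add_cos_sq u
  have h3 := sin_sq_add_cos_sq v
  simp only [cos_add, sin_add, sin_sub, cos_sub, sin_two_mul, cos_two_mul]
  linear_combination (4*cos u*sin u*(1 - cos v^2) + 4*cos v*sin v*(cos u^2 - 1)) * h1
    + (-(4*cos u*sin u)) * h3 + (4*cos v*sin v) * h2

lemma lin_qqq {m : ℕ} (hm : 0 < m) (a b x : ℤ) :
    lin (q m a) (q m b) (q m x)
      = 4 * sin (π*((b:ℝ)-a)/m) * sin (π*((x:ℝ)-b)/m) * sin (π*((x:ℝ)-a)/m) := by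
  have hm' : (m:ℝ) ≠ 0 := by positivity
  have hb : 2*π*(b:ℝ)/m = 2*π*(a:ℝ)/m + 2*(π*((b:ℝ)-a)/m) := by field_simp; ring
  have hx : 2*π*(x:ℝ)/m = 2*π*(a:ℝ)/m + 2*(π*((x:ℝ)-a)/m) := by field_simp; ring
  have hd : π*((x:ℝ)-a)/m - π*((b:ℝ)-a)/m = π*((x:ℝ)-b)/m := by field_simp; ring
  simp only [lin, q]
  rw [hb, hx, tri, hd]

lemma lin_qqo {m : ℕ} (hm : 0 < m) (a b : ℤ) :
    lin (q m a) (q m b) ptO = sin (2*π*((b:ℝ)-a)/m) := by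
  have hm' : (m:ℝ) ≠ 0 := by positivity
  have hd : 2*π*((b:ℝ)-a)/m = 2*π*(b:ℝ)/m - 2*π*(a:ℝ)/m := by field_simp
  simp only [lin, q, ptO, hd, sin_sub]
  ring

lemma lin_oqq {m : ℕ} (hm : 0 < m) (u x : ℤ) :
    lin ptO (q m u) (q m x) = sin (2*π*((x:ℝ)-u)/m) := by
  have hm' : (m:ℝ) ≠ 0 := by positivity
  have hd : 2*π*((x:ℝ)-u)/m = 2*π*(x:ℝ)/m - 2*π*(u:ℝ)/m := by field_simp
  simp only [lin, q, ptO, hd, sin_sub]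
  ring

lemma S_pos {m : ℕ} (hm : 0 < m) {d : ℤ} (h1 : 0 < d) (h2 : d < m) :
    0 < sin (π*(d:ℝ)/m) := by
  apply sin_pos_of_pos_of_lt_pi
  · have : (0:ℝ) < (d:ℝ) := by exact_mod_cast h1
    positivity
  · have hdm : (d:ℝ) < m := by exact_mod_cast h2
    have hm0 : (0:ℝ) < m := by exact_mod_cast hm
    rw [div_lt_iff₀ hm0]
    nlinarith [pi_pos]

lemma S_nonneg {m : ℕ} (hm : 0 < m) {d : ℤ} (h1 : 0 ≤ d) (h2 : d ≤ m) :
    0 ≤ sin (π*(d:ℝ)/m) := by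
  rcases eq_or_lt_of_le h1 with h | h
  · simp [← h]
  rcases eq_or_lt_of_le h2 with h' | h'
  · have hm' : (m:ℝ) ≠ 0 := by positivity
    subst h'
    have : π*((m:ℤ):ℝ)/m = π := by push_cast; field_simp
    rw [this, sin_pi]
  · exact le_of_lt (S_pos hm h h')

lemma sin2_pos {m : ℕ} (hm : 0 < m) {d : ℤ} (h1 : 0 < d) (h2 : 2*d < m) :
    0 < sin (2*π*(d:ℝ)/m) := by
  apply sin_pos_of_pos_of_lt_pi
  · have : (0:ℝ) < (d:ℝ) := by exact_mod_cast h1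
    positivity
  · have hdm : 2*(d:ℝ) < m := by exact_mod_cast h2
    have hm0 : (0:ℝ) < m := by exact_mod_cast hm
    rw [div_lt_iff₀ hm0]
    nlinarith [pi_pos]

lemma sin2_neg {m : ℕ} (hm : 0 < m) {d : ℤ} (h1 : m < 2*d) (h2 : d < m) :
    sin (2*π*(d:ℝ)/m) < 0 := by
  have h3 : 0 < sin (2*π*(((m:ℤ) - d:ℤ):ℝ)/m) := sin2_pos hm (by omega) (by omega)
  have hm0 : (0:ℝ) < m := by exact_mod_cast hm
  have hm' : (m:ℝ) ≠ 0 := ne_of_gt hm0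
  have harg : 2*π*(((m:ℤ) - d:ℤ):ℝ)/m = -(2*π*(d:ℝ)/m) + 2*π := by push_cast; field_simp; ring
  rw [harg, sin_add_two_pi, sin_neg] at h3
  linarith

lemma D_pos {m : ℕ} (hm : 0 < m) {a b : ℤ} (h1 : a < b) (h2 : b - a < m) :
    0 < sin (π*((b:ℝ)-a)/m) := by
  have := S_pos hm (d := b - a) (by omega) h2
  push_cast at this
  convert this using 3 <;> ring

lemma D_nonneg {m : ℕ} (hm : 0 < m) {a b : ℤ} (h1 : a ≤ b) (h2 : b - a ≤ m) :
    0 ≤ sin (π*((b:ℝ)-a)/m) := by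
  have := S_nonneg hm (d := b - a) (by omega) h2
  push_cast at this
  convert this using 3 <;> ring

lemma D2_pos {m : ℕ} (hm : 0 < m) {a b : ℤ} (h1 : a < b) (h2 : 2*(b-a) < m) :
    0 < sin (2*π*((b:ℝ)-a)/m) := by
  have := sin2_pos hm (d := b - a) (by omega) h2
  push_cast at this
  convert this using 3 <;> ring

lemma D2_neg {m : ℕ} (hm : 0 < m) {a b : ℤ} (h1 : m < 2*(b-a)) (h2 : b - a < m) :
    sin (2*π*((b:ℝ)-a)/m) < 0 := by
  have := sin2_neg hm (d := b - a) h1 h2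
  push_cast at this
  convert this using 3 <;> ring

lemma masterCC {m : ℕ} (hm : 0 < m) {a b c d : ℤ} (h1 : a < b) (h2 : b - a < m)
    (hc1 : b ≤ c) (hc2 : c ≤ a + m) (hd1 : b ≤ d) (hd2 : d ≤ a + m)
    (hstrict : (b < c ∧ c < a + m) ∨ (b < d ∧ d < a + m)) :
    openSegment ℝ (q m a) (q m b) ∩ openSegment ℝ (q m c) (q m d) = ∅ := by
  have hab := D_pos hm h1 h2
  have hcn : 0 ≤ lin (q m a) (q m b) (q m c) := by
    rw [lin_qqq hm]
    have := D_nonneg hm (a := b) (b := c) hc1 (by omega)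
    have := D_nonneg hm (a := a) (b := c) (by omega) (by omega)
    positivity
  have hdn : 0 ≤ lin (q m a) (q m b) (q m d) := by
    rw [lin_qqq hm]
    have := D_nonneg hm (a := b) (b := d) hd1 (by omega)
    have := D_nonneg hm (a := a) (b := d) (by omega) (by omega)
    positivity
  apply disj_of_lin _ _ _ _ hcn hdn
  rcases hstrict with ⟨hs1, hs2⟩ | ⟨hs1, hs2⟩
  · have hpos : 0 < lin (q m a) (q m b) (q m c) := by
      rw [lin_qqq hm]
      have := D_pos hm (a := b) (b := c) hs1 (by omega)
      have := D_pos hm (a := a) (b := c) (by omega) (by omega)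
      positivity
    linarith
  · have hpos : 0 < lin (q m a) (q m b) (q m d) := by
      rw [lin_qqq hm]
      have := D_pos hm (a := b) (b := d) hs1 (by omega)
      have := D_pos hm (a := a) (b := d) (by omega) (by omega)
      positivity
    linarith

lemma masterCO {m : ℕ} (hm : 0 < m) {a b x : ℤ} (h1 : a < b) (h2 : 2*(b-a) < m)
    (hx1 : b ≤ x) (hx2 : x ≤ a + m) :
    openSegment ℝ (q m a) (q m b) ∩ openSegment ℝ ptO (q m x) = ∅ := by
  have ho : 0 < lin (q m a) (q m b) ptO := by
    rw [lin_qqo hm]; exact D2_pos hm h1 h2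
  have hxn : 0 ≤ lin (q m a) (q m b) (q m x) := by
    rw [lin_qqq hm]
    have := D_pos hm h1 (by omega)
    have := D_nonneg hm (a := b) (b := x) hx1 (by omega)
    have := D_nonneg hm (a := a) (b := x) (by omega) (by omega)
    positivity
  apply disj_of_lin _ _ _ _ (le_of_lt ho) hxn
  linarith

lemma masterOO {m : ℕ} (hm : 0 < m) {u v : ℤ} (h1 : u < v) (h2 : v - u < m)
    (h3 : 2*(v-u) ≠ m) :
    openSegment ℝ ptO (q m u) ∩ openSegment ℝ ptO (q m v) = ∅ := by
  rcases lt_or_gt_of_ne h3 with h | h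
  · apply disj_of_lin
    · have : lin ptO (q m u) ptO = 0 := by simp [lin, ptO]
      rw [this]
    · rw [lin_oqq hm]; exact le_of_lt (D2_pos hm h1 h)
    · have h5 : lin ptO (q m u) ptO = 0 := by simp [lin, ptO]
      rw [h5, lin_oqq hm]
      have := D2_pos hm h1 h
      linarith
  · have key : openSegment ℝ (q m u) ptO ∩ openSegment ℝ ptO (q m v) = ∅ := by
      apply disj_of_lin
      · have : lin (q m u) ptO ptO = 0 := by simp [lin, ptO]; ring
        rw [this]
      · have hsw : lin (q m u) ptO (q m v) = - lin ptO (q m u) (q m v) := by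
          simp only [lin, ptO]; ring
        rw [hsw, lin_oqq hm]
        have := D2_neg hm (a := u) (b := v) h h2
        linarith
      · have h5 : lin (q m u) ptO ptO = 0 := by simp [lin, ptO]; ring
        have hsw : lin (q m u) ptO (q m v) = - lin ptO (q m u) (q m v) := by
          simp only [lin, ptO]; ring
        rw [h5, hsw, lin_oqq hm]
        have := D2_neg hm (a := u) (b := v) h h2
        linarith
    rw [openSegment_symm] at key
    exact key


lemma pathGraph_isAcyclic (N : ℕ) : (SimpleGraph.pathGraph N).IsAcyclic := by
  classical
  intro v c hc
  have hne : (c.support.toFinset : Finset (Fin N)).Nonempty :=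
    ⟨v, by simp [c.start_mem_support]⟩
  set u := c.support.toFinset.max' hne with hu
  have humem : u ∈ c.support := by
    have := c.support.toFinset.max'_mem hne
    simpa using this
  have hmax : ∀ w ∈ c.support, w ≤ u := fun w hw =>
    c.support.toFinset.le_max' w (by simpa using hw)
  have hcyc : (c.rotate u humem).IsCycle := hc.rotate humem
  have hsup : ∀ w ∈ (c.rotate u humem).support, w ≤ u := by
    intro w hw
    rw [SimpleGraph.Walk.support_eq_cons] at hw
    rcases List.mem_cons.mp hw with rfl | hw
    · exact le_refl _
    · exact hmax w (List.mem_of_mem_tail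
        ((SimpleGraph.Walk.support_rotate c u humem).mem_iff.mp hw))
  revert hcyc hsup
  generalize c.rotate u humem = c'
  intro hcyc hsup
  cases c' with
  | nil => exact hcyc.ne_nil rfl
  | cons hadj r =>
    rename_i w
    rw [SimpleGraph.Walk.cons_isCycle_iff] at hcyc
    obtain ⟨hpath, hedge⟩ := hcyc
    have hwne : w ≠ u := hadj.ne'
    have hwle : w ≤ u := hsup w (by simp [SimpleGraph.Walk.support_cons, r.start_mem_support])
    have hw1 : (w:ℕ) + 1 = (u:ℕ) := by
      have h2 := SimpleGraph.pathGraph_adj.mp hadj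
      have h3 : (w:ℕ) ≤ (u:ℕ) := hwle
      have h4 : (w:ℕ) ≠ (u:ℕ) := fun h => hwne (Fin.ext h)
      omega
    have hrnil : ¬ r.reverse.Nil := SimpleGraph.Walk.not_nil_of_ne hwne.symm
    set x := r.reverse.getVert 1 with hx
    have hadj2 : (SimpleGraph.pathGraph N).Adj u x := r.reverse.adj_snd hrnil
    have hxmem : x ∈ r.support := by
      have h2 := SimpleGraph.Walk.cons_tail_eq r.reverse hrnil
      have : x ∈ r.reverse.support := by
        rw [← h2, SimpleGraph.Walk.support_cons]
        exact List.mem_cons_of_mem _ (SimpleGraph.Walk.start_mem_support _)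
      rwa [SimpleGraph.Walk.support_reverse, List.mem_reverse] at this
    have hxle : x ≤ u := hsup x (by simp [SimpleGraph.Walk.support_cons, hxmem])
    have hx1 : (x:ℕ) + 1 = (u:ℕ) := by
      have h2 := SimpleGraph.pathGraph_adj.mp hadj2
      have h3 : (x:ℕ) ≤ (u:ℕ) := hxle
      have h4 : (x:ℕ) ≠ (u:ℕ) := fun h => hadj2.ne' (Fin.ext h)
      omega
    have hxw : x = w := Fin.ext (by omega)
    have hmem : s(u, x) ∈ r.reverse.edges := by
      have h2 := SimpleGraph.Walk.cons_tail_eq r.reverse hrnil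
      rw [← h2, SimpleGraph.Walk.edges_cons]
      exact List.mem_cons_self
    rw [SimpleGraph.Walk.edges_reverse, List.mem_reverse] at hmem
    rw [hxw] at hmem
    exact hedge hmem




lemma int_dvd_small {m : ℕ} {d : ℤ} (h : (m:ℤ) ∣ d) (h1 : -(m:ℤ) < d) (h2 : d < m) :
    d = 0 :=
  Int.eq_zero_of_abs_lt_dvd h (abs_lt.mpr ⟨h1, h2⟩)

lemma q_inj' {m : ℕ} (hm : 0 < m) {u v : ℤ} (h : q m u = q m v) (h1 : -(m:ℤ) < u - v)
    (h2 : u - v < m) : u = v := by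
  have := int_dvd_small (q_inj hm h) h1 h2
  omega

def M (n : ℕ) : ℕ := 2 * n - 1

lemma wheel_eq (n : ℕ) :
    wheel n = insert ptO ((Finset.range (M n)).image fun j : ℕ => q (M n) (j:ℤ)) := by
  unfold wheel M ptO q
  congr 1

lemma ptO_mem_wheel (n : ℕ) : ptO ∈ wheel n := by
  rw [wheel_eq]; exact Finset.mem_insert_self _ _

lemma q_mem_wheel {n : ℕ} (hn : 2 ≤ n) (j : ℤ) : q (M n) j ∈ wheel n := by
  have hm : 0 < M n := by unfold M; omega
  have hdm := Int.mul_ediv_add_emod j (M n)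
  have h1 : 0 ≤ j % (M n : ℤ) := Int.emod_nonneg j (by exact_mod_cast hm.ne')
  have h2 : j % (M n : ℤ) < (M n : ℤ) := Int.emod_lt_of_pos j (by exact_mod_cast hm)
  have hq : q (M n) j = q (M n) (((j % (M n : ℤ)).toNat : ℕ) : ℤ) := by
    apply q_eq_of_dvd hm
    rw [Int.toNat_of_nonneg h1]
    exact ⟨j / (M n : ℤ), by linarith⟩
  rw [wheel_eq, hq]
  apply Finset.mem_insert_of_mem
  exact Finset.mem_image_of_mem _ (Finset.mem_range.mpr (by omega))

lemma card_wheel {n : ℕ} (hn : 2 ≤ n) : (wheel n).card = 2 * n := by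
  have hm : 0 < M n := by unfold M; omega
  rw [wheel_eq]
  rw [Finset.card_insert_of_notMem, Finset.card_image_of_injOn, Finset.card_range]
  · unfold M; omega
  · intro j1 h1 j2 h2 heq
    simp only [Finset.coe_range, Set.mem_Iio] at h1 h2
    have := q_inj' hm heq (by omega) (by omega)
    omega
  · intro hmem
    obtain ⟨j, _, hj⟩ := Finset.mem_image.mp hmem
    exact q_ne_o _ hj



def K (n : ℕ) : ℕ := n / 2


/-! ## the sequence of points of the `i`-th path -/

def zig (i : ℤ) (s : ℕ) : ℤ := if s % 2 = 0 then i - (s / 2 : ℕ) else i + ((s + 1) / 2 : ℕ)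

def bseq (n : ℕ) (i : ℤ) (s : ℕ) : Pt :=
  if s = 2 * K n then ptO else if s < 2 * K n then q (M n) (zig i s) else q (M n) (zig i (s - 1))

variable {n : ℕ}

lemma bseq_eqk (i : ℤ) : bseq n i (2 * K n) = ptO := by unfold bseq; rw [if_pos rfl]

lemma bseq_lt (i : ℤ) {s : ℕ} (h : s < 2 * K n) : bseq n i s = q (M n) (zig i s) := by
  unfold bseq; rw [if_neg (by omega), if_pos h]

lemma bseq_gt (i : ℤ) {s : ℕ} (h : 2 * K n < s) : bseq n i s = q (M n) (zig i (s - 1)) := by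
  unfold bseq; rw [if_neg (by omega), if_neg (by omega)]

lemma bseq_mem (hn : 2 ≤ n) (i : ℤ) (s : ℕ) : bseq n i s ∈ wheel n := by
  unfold bseq
  split_ifs
  · exact ptO_mem_wheel n
  · exact q_mem_wheel hn _
  · exact q_mem_wheel hn _

lemma zig_bound (hn : 2 ≤ n) (i : ℤ) {a b : ℕ} (ha : a ≤ 2*n-2) (hb : b ≤ 2*n-2) :
    -((M n:ℕ) : ℤ) < zig i a - zig i b ∧ zig i a - zig i b < (M n : ℤ) := by
  have hMn : M n = 2*n-1 := rfl
  unfold zig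
  split_ifs <;> constructor <;> omega

lemma zig_inj (i : ℤ) {a b : ℕ} (h : zig i a = zig i b) : a = b := by
  unfold zig at h
  split_ifs at h <;> omega

lemma bseq_inj (hn : 2 ≤ n) (i : ℤ) {s s' : ℕ} (hs : s < 2*n) (hs' : s' < 2*n)
    (h : bseq n i s = bseq n i s') : s = s' := by
  have hm : 0 < M n := by unfold M; omega
  have hKn : K n = n / 2 := rfl
  unfold bseq at h
  split_ifs at h with h1 h2 h3 h4 h5 h6 h7
  · omega
  · exact absurd h.symm (q_ne_o _)
  · exact absurd h.symm (q_ne_o _)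
  · exact absurd h (q_ne_o _)
  · have := q_inj' hm h (zig_bound hn i (by omega) (by omega)).1 (zig_bound hn i (by omega) (by omega)).2
    exact zig_inj i this
  · have := q_inj' hm h (zig_bound hn i (by omega) (by omega)).1 (zig_bound hn i (by omega) (by omega)).2
    have := zig_inj i this
    omega
  · exact absurd h (q_ne_o _)
  · have := q_inj' hm h (zig_bound hn i (by omega) (by omega)).1 (zig_bound hn i (by omega) (by omega)).2
    have := zig_inj i this
    omega
  · have := q_inj' hm h (zig_bound hn i (by omega) (by omega)).1 (zig_bound hn i (by omega) (by omega)).2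
    have := zig_inj i this
    omega

/-! ## the graph -/

def vmap (n : ℕ) (hn : 2 ≤ n) (i : ℤ) (s : Fin (2*n)) : {x // x ∈ wheel n} :=
  ⟨bseq n i s.val, bseq_mem hn i s.val⟩

lemma vmap_bij (hn : 2 ≤ n) (i : ℤ) : Function.Bijective (vmap n hn i) := by
  rw [Fintype.bijective_iff_injective_and_card]
  constructor
  · intro s s' h
    exact Fin.ext (bseq_inj hn i s.isLt s'.isLt (congrArg Subtype.val h))
  · rw [Fintype.card_coe, card_wheel hn, Fintype.card_fin]

def pEquiv (n : ℕ) (hn : 2 ≤ n) (i : ℤ) : Fin (2*n) ≃ {x // x ∈ wheel n} :=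
  Equiv.ofBijective _ (vmap_bij hn i)

def PG (n : ℕ) (hn : 2 ≤ n) (i : ℤ) : SimpleGraph {x // x ∈ wheel n} :=
  (SimpleGraph.pathGraph (2*n)).comap (pEquiv n hn i).symm

lemma PG_adj {hn : 2 ≤ n} {i : ℤ} {u v : {x // x ∈ wheel n}} :
    (PG n hn i).Adj u v ↔
      (SimpleGraph.pathGraph (2*n)).Adj ((pEquiv n hn i).symm u) ((pEquiv n hn i).symm v) :=
  Iff.rfl

def pgIso (n : ℕ) (hn : 2 ≤ n) (i : ℤ) : PG n hn i ≃g SimpleGraph.pathGraph (2*n) :=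
  ⟨(pEquiv n hn i).symm, Iff.rfl⟩

lemma PG_isTree (hn : 2 ≤ n) (i : ℤ) : (PG n hn i).IsTree := by
  constructor
  · rw [(pgIso n hn i).connected_iff]
    have h2 : 2*n = (2*n-1)+1 := by omega
    rw [h2]
    exact SimpleGraph.pathGraph_connected (2*n-1)
  · intro v c hc
    exact pathGraph_isAcyclic (2*n) (c.map (pgIso n hn i).toEmbedding.toHom)
      ((SimpleGraph.Walk.map_isCycle_iff_of_injective (pgIso n hn i).injective).mpr hc)

lemma PG_degree (hn : 2 ≤ n) (i : ℤ) :
    ∀ v a b c : {x // x ∈ wheel n}, (PG n hn i).Adj v a → (PG n hn i).Adj v b →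
      (PG n hn i).Adj v c → (a = b ∨ a = c ∨ b = c) := by
  intro v a b c hva hvb hvc
  rw [PG_adj, SimpleGraph.pathGraph_adj] at hva hvb hvc
  set f := (pEquiv n hn i).symm
  have hinj : Function.Injective f := f.injective
  have : (f a).val = (f b).val ∨ (f a).val = (f c).val ∨ (f b).val = (f c).val := by omega
  rcases this with h | h | h
  · exact Or.inl (hinj (Fin.ext h))
  · exact Or.inr (Or.inl (hinj (Fin.ext h)))
  · exact Or.inr (Or.inr (hinj (Fin.ext h)))

lemma adj_pos {hn : 2 ≤ n} {i : ℤ} {a b : {x // x ∈ wheel n}} (h : (PG n hn i).Adj a b) :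
    ∃ s : ℕ, ∃ (h1 : s < 2*n) (h2 : s+1 < 2*n),
      (a = pEquiv n hn i ⟨s, h1⟩ ∧ b = pEquiv n hn i ⟨s+1, h2⟩) ∨
      (b = pEquiv n hn i ⟨s, h1⟩ ∧ a = pEquiv n hn i ⟨s+1, h2⟩) := by
  rw [PG_adj, SimpleGraph.pathGraph_adj] at h
  rcases h with h | h
  · refine ⟨((pEquiv n hn i).symm a).val, ((pEquiv n hn i).symm a).isLt, by
      rw [h]; exact ((pEquiv n hn i).symm b).isLt, Or.inl ⟨?_, ?_⟩⟩
    · conv_lhs => rw [← (pEquiv n hn i).apply_symm_apply a]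
    · conv_lhs => rw [← (pEquiv n hn i).apply_symm_apply b]
      congr 1
      exact Fin.ext h.symm
  · refine ⟨((pEquiv n hn i).symm b).val, ((pEquiv n hn i).symm b).isLt, by
      rw [h]; exact ((pEquiv n hn i).symm a).isLt, Or.inr ⟨?_, ?_⟩⟩
    · conv_lhs => rw [← (pEquiv n hn i).apply_symm_apply b]
    · conv_lhs => rw [← (pEquiv n hn i).apply_symm_apply a]
      congr 1
      exact Fin.ext h.symm

lemma coe_pEquiv (hn : 2 ≤ n) (i : ℤ) (s : Fin (2*n)) :
    ((pEquiv n hn i s : {x // x ∈ wheel n}) : Pt) = bseq n i s.val := rfl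

/-! ## edge descriptors -/

def Desc (n : ℕ) (i : ℤ) (X Y : Pt) : Prop :=
  (∃ t : ℕ, 1 ≤ t ∧ t ≤ n-1 ∧ t ≠ K n ∧ X = q (M n) (i + t) ∧ Y = q (M n) (i - t)) ∨
  (∃ t : ℕ, t ≤ n-2 ∧ X = q (M n) (i - t) ∧ Y = q (M n) (i + t + 1)) ∨
  (X = q (M n) (i + K n) ∧ Y = ptO) ∨
  (X = ptO ∧ Y = q (M n) (i - K n))

lemma edge_char (hn : 2 ≤ n) (i : ℤ) {s : ℕ} (hs : s + 1 < 2*n) :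
    Desc n i (bseq n i s) (bseq n i (s+1)) := by
  have hKn : K n = n / 2 := rfl
  have hMn : M n = 2*n-1 := rfl
  rcases lt_trichotomy (s+1) (2*K n) with h | h | h
  · rcases Nat.even_or_odd s with he | ho
    · have he' : s % 2 = 0 := Nat.even_iff.mp he
      right; left
      refine ⟨s/2, by omega, ?_, ?_⟩
      · rw [bseq_lt i (by omega)]; unfold zig; rw [if_pos (by omega)]
      · rw [bseq_lt i (by omega)]; unfold zig; rw [if_neg (by omega)]
        all_goals (congr 1 <;> (push_cast; omega))
    · have ho' : s % 2 = 1 := Nat.odd_iff.mp ho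
      left
      refine ⟨(s+1)/2, by omega, by omega, by omega, ?_, ?_⟩
      · rw [bseq_lt i (by omega)]; unfold zig; rw [if_neg (by omega)]
      · rw [bseq_lt i (by omega)]; unfold zig; rw [if_pos (by omega)]
        all_goals (congr 1 <;> (push_cast; omega))
  · right; right; left
    constructor
    · rw [bseq_lt i (by omega)]; unfold zig; rw [if_neg (by omega)]
      all_goals (congr 1 <;> (push_cast; omega))
    · rw [show s+1 = 2*K n from h, bseq_eqk]
  · rcases Nat.lt_or_ge s (2*K n) with h2 | h2
    · omega
    rcases Nat.eq_or_lt_of_le h2 with h3 | h3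
    · right; right; right
      constructor
      · rw [← h3, bseq_eqk]
      · rw [bseq_gt i (by omega)]
        unfold zig; rw [if_pos (by omega)]
        all_goals (congr 1 <;> (push_cast; omega))
    · rcases Nat.even_or_odd s with he | ho
      · have he' : s % 2 = 0 := Nat.even_iff.mp he
        left
        refine ⟨s/2, by omega, by omega, by omega, ?_, ?_⟩
        · rw [bseq_gt i (by omega)]; unfold zig; rw [if_neg (by omega)]
          all_goals (congr 1 <;> (push_cast; omega))
        · rw [bseq_gt i (by omega)]; unfold zig; rw [if_pos (by omega)]
          all_goals (congr 1 <;> (push_cast; omega))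
      · have ho' : s % 2 = 1 := Nat.odd_iff.mp ho
        right; left
        refine ⟨(s-1)/2, by omega, ?_, ?_⟩
        · rw [bseq_gt i (by omega)]; unfold zig; rw [if_pos (by omega)]
          all_goals (congr 1 <;> (push_cast; omega))
        · rw [bseq_gt i (by omega)]; unfold zig; rw [if_neg (by omega)]
          all_goals (congr 1 <;> (push_cast; omega))

/-! ## core crossing-freeness lemmas -/

lemma coreAA (hn : 2 ≤ n) (i : ℤ) {t u : ℕ} (h1 : 1 ≤ t) (h2 : t < u) (h3 : u ≤ n-1) :
    openSegment ℝ (q (M n) (i+t)) (q (M n) (i-t)) ∩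
      openSegment ℝ (q (M n) (i+u)) (q (M n) (i-u)) = ∅ := by
  have hm : 0 < M n := by unfold M; omega
  have hMn : M n = 2*n-1 := rfl
  rw [openSegment_symm]
  rw [show q (M n) (i-u) = q (M n) (i-u+M n) from q_eq_of_dvd hm ⟨-1, by ring⟩]
  refine masterCC hm (a := i-t) (b := i+t) (c := i+u) (d := i-u+M n)
    ?_ ?_ ?_ ?_ ?_ ?_ (Or.inl ⟨?_, ?_⟩) <;> omega

lemma coreAB (hn : 2 ≤ n) (i : ℤ) {a b : ℕ} (h1 : 1 ≤ a) (h2 : a ≤ n-1) (h3 : b ≤ n-2) :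
    openSegment ℝ (q (M n) (i+a)) (q (M n) (i-a)) ∩
      openSegment ℝ (q (M n) (i-b)) (q (M n) (i+b+1)) = ∅ := by
  have hm : 0 < M n := by unfold M; omega
  have hMn : M n = 2*n-1 := rfl
  rcases le_or_gt a b with hcase | hcase
  · rw [openSegment_symm]
    rw [show q (M n) (i-b) = q (M n) (i-b+M n) from q_eq_of_dvd hm ⟨-1, by ring⟩]
    refine masterCC hm (a := i-a) (b := i+a) (c := i-b+M n) (d := i+b+1)
      ?_ ?_ ?_ ?_ ?_ ?_ (Or.inr ⟨?_, ?_⟩) <;> omega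
  · rw [Set.inter_comm]
    rw [show q (M n) (i-a) = q (M n) (i-a+M n) from q_eq_of_dvd hm ⟨-1, by ring⟩]
    refine masterCC hm (a := i-b) (b := i+b+1) (c := i+a) (d := i-a+M n)
      ?_ ?_ ?_ ?_ ?_ ?_ (Or.inr ⟨?_, ?_⟩) <;> omega

lemma coreBB (hn : 2 ≤ n) (i : ℤ) {t u : ℕ} (h1 : t < u) (h2 : u ≤ n-2) :
    openSegment ℝ (q (M n) (i-t)) (q (M n) (i+t+1)) ∩
      openSegment ℝ (q (M n) (i-u)) (q (M n) (i+u+1)) = ∅ := by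
  have hm : 0 < M n := by unfold M; omega
  have hMn : M n = 2*n-1 := rfl
  rw [show q (M n) (i-u) = q (M n) (i-u+M n) from q_eq_of_dvd hm ⟨-1, by ring⟩]
  refine masterCC hm (a := i-t) (b := i+t+1) (c := i-u+M n) (d := i+u+1)
    ?_ ?_ ?_ ?_ ?_ ?_ (Or.inr ⟨?_, ?_⟩) <;> omega

lemma coreAC (hn : 2 ≤ n) (i : ℤ) {t : ℕ} (h1 : 1 ≤ t) (h2 : t ≤ n-1) (h3 : t ≠ K n) :
    openSegment ℝ (q (M n) (i+t)) (q (M n) (i-t)) ∩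
      openSegment ℝ (q (M n) (i + K n)) ptO = ∅ := by
  have hm : 0 < M n := by unfold M; omega
  have hMn : M n = 2*n-1 := rfl
  have hKn : K n = n / 2 := rfl
  rw [openSegment_symm ℝ (q (M n) (i + (K n : ℕ))) ptO]
  rcases lt_or_gt_of_ne h3 with hc | hc
  · rw [openSegment_symm ℝ (q (M n) (i + (t : ℕ))) (q (M n) (i - (t : ℕ)))]
    refine masterCO hm (a := i-t) (b := i+t) (x := i + K n) ?_ ?_ ?_ ?_ <;> omega
  · rw [show q (M n) (i-t) = q (M n) (i-t+M n) from q_eq_of_dvd hm ⟨-1, by ring⟩]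
    rw [show q (M n) (i+K n) = q (M n) (i+K n+M n) from q_eq_of_dvd hm ⟨-1, by ring⟩]
    refine masterCO hm (a := i+t) (b := i-t+M n) (x := i + K n + M n) ?_ ?_ ?_ ?_ <;> omega

lemma coreAD (hn : 2 ≤ n) (i : ℤ) {t : ℕ} (h1 : 1 ≤ t) (h2 : t ≤ n-1) (h3 : t ≠ K n) :
    openSegment ℝ (q (M n) (i+t)) (q (M n) (i-t)) ∩
      openSegment ℝ ptO (q (M n) (i - K n)) = ∅ := by
  have hm : 0 < M n := by unfold M; omega
  have hMn : M n = 2*n-1 := rfl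
  have hKn : K n = n / 2 := rfl
  rw [show q (M n) (i-K n) = q (M n) (i-K n+M n) from q_eq_of_dvd hm ⟨-1, by ring⟩]
  rcases lt_or_gt_of_ne h3 with hc | hc
  · rw [openSegment_symm ℝ (q (M n) (i + (t : ℕ))) (q (M n) (i - (t : ℕ)))]
    refine masterCO hm (a := i-t) (b := i+t) (x := i - K n + M n) ?_ ?_ ?_ ?_ <;> omega
  · rw [show q (M n) (i-t) = q (M n) (i-t+M n) from q_eq_of_dvd hm ⟨-1, by ring⟩]
    refine masterCO hm (a := i+t) (b := i-t+M n) (x := i - K n + M n) ?_ ?_ ?_ ?_ <;> omega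

lemma coreBC (hn : 2 ≤ n) (i : ℤ) {t : ℕ} (ht : t ≤ n-2) :
    openSegment ℝ (q (M n) (i-t)) (q (M n) (i+t+1)) ∩
      openSegment ℝ (q (M n) (i + K n)) ptO = ∅ := by
  have hm : 0 < M n := by unfold M; omega
  have hMn : M n = 2*n-1 := rfl
  have hKn : K n = n / 2 := rfl
  rw [openSegment_symm ℝ (q (M n) (i + (K n : ℕ))) ptO]
  rcases Nat.lt_or_ge t (K n) with hc | hc
  · refine masterCO hm (a := i-t) (b := i+t+1) (x := i + K n) ?_ ?_ ?_ ?_ <;> omega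
  · rw [show q (M n) (i-t) = q (M n) (i-t+M n) from q_eq_of_dvd hm ⟨-1, by ring⟩]
    rw [show q (M n) (i+K n) = q (M n) (i+K n+M n) from q_eq_of_dvd hm ⟨-1, by ring⟩]
    rw [openSegment_symm ℝ (q (M n) (i - (t : ℕ) + (M n : ℕ))) (q (M n) (i + (t : ℕ) + 1))]
    refine masterCO hm (a := i+t+1) (b := i-t+M n) (x := i + K n + M n) ?_ ?_ ?_ ?_ <;> omega

lemma coreBD (hn : 2 ≤ n) (i : ℤ) {t : ℕ} (ht : t ≤ n-2) :
    openSegment ℝ (q (M n) (i-t)) (q (M n) (i+t+1)) ∩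
      openSegment ℝ ptO (q (M n) (i - K n)) = ∅ := by
  have hm : 0 < M n := by unfold M; omega
  have hMn : M n = 2*n-1 := rfl
  have hKn : K n = n / 2 := rfl
  rw [show q (M n) (i-K n) = q (M n) (i-K n+M n) from q_eq_of_dvd hm ⟨-1, by ring⟩]
  rcases Nat.lt_or_ge t (K n) with hc | hc
  · refine masterCO hm (a := i-t) (b := i+t+1) (x := i - K n + M n) ?_ ?_ ?_ ?_ <;> omega
  · rw [show q (M n) (i-t) = q (M n) (i-t+M n) from q_eq_of_dvd hm ⟨-1, by ring⟩]
    rw [openSegment_symm ℝ (q (M n) (i - (t : ℕ) + (M n : ℕ))) (q (M n) (i + (t : ℕ) + 1))]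
    refine masterCO hm (a := i+t+1) (b := i-t+M n) (x := i - K n + M n) ?_ ?_ ?_ ?_ <;> omega

lemma coreCD (hn : 2 ≤ n) (i : ℤ) :
    openSegment ℝ (q (M n) (i + K n)) ptO ∩ openSegment ℝ ptO (q (M n) (i - K n)) = ∅ := by
  have hm : 0 < M n := by unfold M; omega
  have hMn : M n = 2*n-1 := rfl
  have hKn : K n = n / 2 := rfl
  rw [openSegment_symm ℝ (q (M n) (i + (K n : ℕ))) ptO]
  rw [show q (M n) (i-K n) = q (M n) (i-K n+M n) from q_eq_of_dvd hm ⟨-1, by ring⟩]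
  refine masterOO hm (u := i + K n) (v := i - K n + M n) ?_ ?_ ?_ <;> omega

/-! ## planarity -/

lemma desc_disj (hn : 2 ≤ n) (i : ℤ) {X Y X' Y' : Pt} (h1 : Desc n i X Y) (h2 : Desc n i X' Y')
    (hne : s(X,Y) ≠ s(X',Y')) :
    openSegment ℝ X Y ∩ openSegment ℝ X' Y' = ∅ := by
  rcases h1 with ⟨t, ht1, ht2, ht3, hX, hY⟩ | ⟨t, ht1, hX, hY⟩ | ⟨hX, hY⟩ | ⟨hX, hY⟩ <;>
    rcases h2 with ⟨u, hu1, hu2, hu3, hX', hY'⟩ | ⟨u, hu1, hX', hY'⟩ | ⟨hX', hY'⟩ | ⟨hX', hY'⟩ <;>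
    subst hX <;> subst hY <;> subst hX' <;> subst hY'
  · rcases lt_trichotomy t u with hc | hc | hc
    · exact coreAA hn i ht1 hc hu2
    · subst hc; exact absurd rfl hne
    · rw [Set.inter_comm]; exact coreAA hn i hu1 hc ht2
  · exact coreAB hn i ht1 ht2 hu1
  · exact coreAC hn i ht1 ht2 ht3
  · exact coreAD hn i ht1 ht2 ht3
  · rw [Set.inter_comm]; exact coreAB hn i hu1 hu2 ht1
  · rcases lt_trichotomy t u with hc | hc | hc
    · exact coreBB hn i hc hu1
    · subst hc; exact absurd rfl hne
    · rw [Set.inter_comm]; exact coreBB hn i hc ht1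
  · exact coreBC hn i ht1
  · exact coreBD hn i ht1
  · rw [Set.inter_comm]; exact coreAC hn i hu1 hu2 hu3
  · rw [Set.inter_comm]; exact coreBC hn i hu1
  · exact absurd rfl hne
  · exact coreCD hn i
  · rw [Set.inter_comm]; exact coreAD hn i hu1 hu2 hu3
  · rw [Set.inter_comm]; exact coreBD hn i hu1
  · rw [Set.inter_comm]; exact coreCD hn i
  · exact absurd rfl hne

lemma PG_isPlane (hn : 2 ≤ n) (i : ℤ) : IsPlaneGraph (PG n hn i) := by
  intro a b c d hab hcd hne
  obtain ⟨s, hs1, hs2, hcase1⟩ := adj_pos hab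
  obtain ⟨s', hs1', hs2', hcase2⟩ := adj_pos hcd
  have hD1 := edge_char hn i hs2
  have hD2 := edge_char hn i hs2'
  have hnePt : s((a:Pt),(b:Pt)) ≠ s((c:Pt),(d:Pt)) := by
    intro h
    apply hne
    rcases Sym2.eq_iff.mp h with ⟨h1, h2⟩ | ⟨h1, h2⟩
    · rw [Subtype.ext h1, Subtype.ext h2]
    · rw [Subtype.ext h1, Subtype.ext h2, Sym2.eq_swap]
  rcases hcase1 with ⟨ha, hb⟩ | ⟨hb, ha⟩ <;> rcases hcase2 with ⟨hc, hd⟩ | ⟨hd, hc⟩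
  · have e1 : (a : Pt) = bseq n i s := by rw [ha]; rfl
    have e2 : (b : Pt) = bseq n i (s+1) := by rw [hb]; rfl
    have e3 : (c : Pt) = bseq n i s' := by rw [hc]; rfl
    have e4 : (d : Pt) = bseq n i (s'+1) := by rw [hd]; rfl
    have hS : s((a:Pt),(b:Pt)) = s(bseq n i s, bseq n i (s+1)) := by rw [e1, e2]
    have hS' : s((c:Pt),(d:Pt)) = s(bseq n i s', bseq n i (s'+1)) := by rw [e3, e4]
    rw [e1, e2, e3, e4]
    exact desc_disj hn i hD1 hD2 (by rw [← hS, ← hS']; exact hnePt)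
  · have e1 : (a : Pt) = bseq n i s := by rw [ha]; rfl
    have e2 : (b : Pt) = bseq n i (s+1) := by rw [hb]; rfl
    have e3 : (c : Pt) = bseq n i (s'+1) := by rw [hc]; rfl
    have e4 : (d : Pt) = bseq n i s' := by rw [hd]; rfl
    have hS : s((a:Pt),(b:Pt)) = s(bseq n i s, bseq n i (s+1)) := by rw [e1, e2]
    have hS' : s((c:Pt),(d:Pt)) = s(bseq n i s', bseq n i (s'+1)) := by
      rw [e3, e4]; exact Sym2.eq_swap
    rw [e1, e2, e3, e4, openSegment_symm ℝ (bseq n i (s'+1)) (bseq n i s')]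
    exact desc_disj hn i hD1 hD2 (by rw [← hS, ← hS']; exact hnePt)
  · have e1 : (a : Pt) = bseq n i (s+1) := by rw [ha]; rfl
    have e2 : (b : Pt) = bseq n i s := by rw [hb]; rfl
    have e3 : (c : Pt) = bseq n i s' := by rw [hc]; rfl
    have e4 : (d : Pt) = bseq n i (s'+1) := by rw [hd]; rfl
    have hS : s((a:Pt),(b:Pt)) = s(bseq n i s, bseq n i (s+1)) := by
      rw [e1, e2]; exact Sym2.eq_swap
    have hS' : s((c:Pt),(d:Pt)) = s(bseq n i s', bseq n i (s'+1)) := by rw [e3, e4]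
    rw [e1, e2, e3, e4, openSegment_symm ℝ (bseq n i (s+1)) (bseq n i s)]
    exact desc_disj hn i hD1 hD2 (by rw [← hS, ← hS']; exact hnePt)
  · have e1 : (a : Pt) = bseq n i (s+1) := by rw [ha]; rfl
    have e2 : (b : Pt) = bseq n i s := by rw [hb]; rfl
    have e3 : (c : Pt) = bseq n i (s'+1) := by rw [hc]; rfl
    have e4 : (d : Pt) = bseq n i s' := by rw [hd]; rfl
    have hS : s((a:Pt),(b:Pt)) = s(bseq n i s, bseq n i (s+1)) := by
      rw [e1, e2]; exact Sym2.eq_swap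
    have hS' : s((c:Pt),(d:Pt)) = s(bseq n i s', bseq n i (s'+1)) := by
      rw [e3, e4]; exact Sym2.eq_swap
    rw [e1, e2, e3, e4, openSegment_symm ℝ (bseq n i (s+1)) (bseq n i s),
      openSegment_symm ℝ (bseq n i (s'+1)) (bseq n i s')]
    exact desc_disj hn i hD1 hD2 (by rw [← hS, ← hS']; exact hnePt)

/-! ## edge-disjointness -/

lemma desc_clash (hn : 2 ≤ n) {i j : ℤ} (h0i : 0 ≤ i) (h1i : i ≤ (n:ℤ)-2) (h0j : 0 ≤ j)
    (h1j : j ≤ (n:ℤ)-2) (hij : i ≠ j) {X Y : Pt} (hdi : Desc n i X Y)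
    (hdj : Desc n j X Y ∨ Desc n j Y X) : False := by
  have hm : 0 < M n := by unfold M; omega
  have hMn : M n = 2*n-1 := rfl
  have hKn : K n = n / 2 := rfl
  rcases hdi with ⟨t, ht1, ht2, ht3, hX, hY⟩ | ⟨t, ht1, hX, hY⟩ | ⟨hX, hY⟩ | ⟨hX, hY⟩ <;>
    subst hX <;> subst hY <;>
    rcases hdj with hdj | hdj <;>
    rcases hdj with ⟨u, hu1, hu2, hu3, hA, hB⟩ | ⟨u, hu1, hA, hB⟩ | ⟨hA, hB⟩ | ⟨hA, hB⟩ <;>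
  first
    | exact q_ne_o _ hA
    | exact q_ne_o _ hB
    | exact q_ne_o _ hA.symm
    | exact q_ne_o _ hB.symm
    | (have d1 := q_inj hm hA
       have d2 := q_inj hm hB
       have h0 := int_dvd_small (dvd_add d1 d2) (by omega) (by omega)
       omega)
    | (have d1 := q_inj hm hA
       have h0 := int_dvd_small d1 (by omega) (by omega)
       omega)
    | (have d1 := q_inj hm hB
       have h0 := int_dvd_small d1 (by omega) (by omega)
       omega)

lemma PG_disjoint (hn : 2 ≤ n) {i j : ℤ} (h0i : 0 ≤ i) (h1i : i ≤ (n:ℤ)-2) (h0j : 0 ≤ j)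
    (h1j : j ≤ (n:ℤ)-2) (hij : i ≠ j) :
    Disjoint (PG n hn i).edgeSet (PG n hn j).edgeSet := by
  rw [Set.disjoint_left]
  intro e hei hej
  induction e using Sym2.ind with
  | _ u v =>
    rw [SimpleGraph.mem_edgeSet] at hei hej
    have hDi : Desc n i (↑u) (↑v) ∨ Desc n i (↑v) (↑u) := by
      obtain ⟨s, hs1, hs2, hc⟩ := adj_pos hei
      rcases hc with ⟨h1, h2⟩ | ⟨h1, h2⟩
      · left
        have e1 : (u:Pt) = bseq n i s := by rw [h1]; rfl
        have e2 : (v:Pt) = bseq n i (s+1) := by rw [h2]; rfl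
        rw [e1, e2]; exact edge_char hn i hs2
      · right
        have e1 : (v:Pt) = bseq n i s := by rw [h1]; rfl
        have e2 : (u:Pt) = bseq n i (s+1) := by rw [h2]; rfl
        rw [e1, e2]; exact edge_char hn i hs2
    have hDj : Desc n j (↑u) (↑v) ∨ Desc n j (↑v) (↑u) := by
      obtain ⟨s, hs1, hs2, hc⟩ := adj_pos hej
      rcases hc with ⟨h1, h2⟩ | ⟨h1, h2⟩
      · left
        have e1 : (u:Pt) = bseq n j s := by rw [h1]; rfl
        have e2 : (v:Pt) = bseq n j (s+1) := by rw [h2]; rfl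
        rw [e1, e2]; exact edge_char hn j hs2
      · right
        have e1 : (v:Pt) = bseq n j s := by rw [h1]; rfl
        have e2 : (u:Pt) = bseq n j (s+1) := by rw [h2]; rfl
        rw [e1, e2]; exact edge_char hn j hs2
    rcases hDi with hdi | hdi
    · exact desc_clash hn h0i h1i h0j h1j hij hdi hDj
    · exact desc_clash hn h0i h1i h0j h1j hij hdi hDj.symm


end WheelAux
end

/-- For every `n ≥ 2`, the complete geometric graph on the wheel
`W_{2n}` contains `n − 1` pairwise edge-disjoint plane spanning paths. -/
theorem wheel_spanning_paths (n : ℕ) (hn : 2 ≤ n) :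
    ∃ P : Fin (n - 1) → SimpleGraph {x // x ∈ wheel n},
      (∀ i, IsPlaneSpanningPath (P i)) ∧
      (∀ i j, i ≠ j → Disjoint (P i).edgeSet (P j).edgeSet) := by
  refine ⟨fun i => WheelAux.PG n hn ((i.val : ℕ) : ℤ),
    fun i => ⟨⟨WheelAux.PG_isTree hn _, WheelAux.PG_isPlane hn _⟩, WheelAux.PG_degree hn _⟩,
    fun i j hij => ?_⟩
  have hi := i.isLt
  have hj := j.isLt
  refine WheelAux.PG_disjoint hn (by positivity) (by omega) (by positivity) (by omega) ?_
  intro h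
  exact hij (Fin.ext (by exact_mod_cast h))
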